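/- Let H be a finite simple graph, let v be a vertex of H, let X be a set of neighbours of v with v ∉ X, and let A = V(H)∖(X ∪ {v}). Suppose that every induced path of H between two distinct vertices of X all of whose internal vertices (possibly none) lie in A has even length. If H admits a proper 3-colouring, then H admits a proper 3-colouring φ with values in {1,2,3} such that φ(v) = 1 and φ(x) = 2 for every x ∈ X. -/

import Mathlib

open SimpleGraph

variable {V : Type*}

/-- A walk is an *induced (chordless) path* if it is a path and every edge of `G` joining
two of its vertices is an edge of the path. -/
def IsIndPath (G : SimpleGraph V) {u v : V} (p : G.Walk u v) : Prop :=
  p.IsPath ∧ ∀ x ∈ p.support, ∀ y ∈ p.support, G.Adj x y → s(x, y) ∈ p.edges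

/-- The interior (set of internal vertices) of a walk from `u` to `v`. -/
def interiorSet {G : SimpleGraph V} {u v : V} (p : G.Walk u v) : Set V :=
  {x | x ∈ p.support ∧ x ≠ u ∧ x ≠ v}

/-- An *induced cycle*: a cycle such that every edge of `G` joining two of its vertices is an
edge of the cycle. -/
def IsIndCycle (G : SimpleGraph V) {u : V} (c : G.Walk u u) : Prop :=
  c.IsCycle ∧ ∀ x ∈ c.support, ∀ y ∈ c.support, G.Adj x y → s(x, y) ∈ c.edges

/-- A *pentagraph*: every cycle has length at least five, and every induced cycle of odd
length has length exactly five. -/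
def IsPentagraph (G : SimpleGraph V) : Prop :=
  (∀ (u : V) (c : G.Walk u u), c.IsCycle → 5 ≤ c.length) ∧
  (∀ (u : V) (c : G.Walk u u), IsIndCycle G c → Odd c.length → c.length = 5)

/-- Removing the vertex set `X` disconnects `G`: two vertices outside `X` are not joined by
any path avoiding `X`. -/
def RemovalDisconnects (G : SimpleGraph V) (X : Set V) : Prop :=
  ∃ a b : ↥(Xᶜ), ¬ (G.induce Xᶜ).Reachable a b

/-- `G` admits a `P₃`-cutset: an induced three-vertex path whose deletion disconnects `G`. -/
def HasP3Cutset (G : SimpleGraph V) : Prop :=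
  ∃ v₁ v₂ v₃ : V, G.Adj v₁ v₂ ∧ G.Adj v₂ v₃ ∧ ¬ G.Adj v₁ v₃ ∧ v₁ ≠ v₃ ∧
    RemovalDisconnects G ({v₁, v₂, v₃} : Set V)

/-- `A` is (the vertex set of) a connected component of `G ∖ X`. -/
def IsCompOf (G : SimpleGraph V) (X : Set V) (A : Set V) : Prop :=
  A.Nonempty ∧ A ⊆ Xᶜ ∧ (G.induce A).Connected ∧
    ∀ u ∈ A, ∀ w ∈ Xᶜ, G.Adj u w → w ∈ A

/-- `G` admits a strong parity star-cutset. -/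
def HasStrongParityStarCutset (G : SimpleGraph V) : Prop :=
  ∃ X : Set V, RemovalDisconnects G X ∧
    ∃ x ∈ X, (∀ y ∈ X, y ≠ x → G.Adj x y) ∧
      ∃ A : Set V, IsCompOf G X A ∧
        (∀ y ∈ X, y ≠ x → ∀ z ∈ X, z ≠ x → y ≠ z →
          ∃ p : G.Walk y z, IsIndPath G p ∧ Even p.length ∧ interiorSet p ⊆ A) ∧
        (∃ a ∈ A, G.Adj x a)

/-- `G` admits a clique cutset. -/
def HasCliqueCutset (G : SimpleGraph V) : Prop :=
  ∃ X : Set V, G.IsClique X ∧ RemovalDisconnects G X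

/-- Vertices of the Petersen graph: 2-element subsets of a 5-element set. -/
abbrev KVert : Type := {s : Finset (Fin 5) // s.card = 2}

/-- The Petersen graph, as the Kneser graph on 2-element subsets of a 5-element set. -/
def petersen : SimpleGraph KVert where
  Adj a b := Disjoint (a : Finset (Fin 5)) (b : Finset (Fin 5))
  symm := ⟨fun a b h => h.symm⟩
  loopless := ⟨by
    intro a h
    rw [disjoint_self] at h
    have h2 := a.2
    simp [h] at h2⟩

def pA : KVert := ⟨{0, 1}, by decide⟩
def pB : KVert := ⟨{2, 3}, by decide⟩

/-- The Petersen graph minus one edge. -/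
def petersen0 : SimpleGraph KVert := petersen.deleteEdges {s(pA, pB)}

/-- The Petersen graph minus one vertex. -/
def petersen1 : SimpleGraph {x : KVert // x ≠ pA} := petersen.induce {x : KVert | x ≠ pA}

/-- The Petersen graph minus two adjacent vertices. -/
def petersen2 : SimpleGraph {x : KVert // x ≠ pA ∧ x ≠ pB} :=
  petersen.induce {x : KVert | x ≠ pA ∧ x ≠ pB}

/-- Two nonadjacent vertices are *linked*: joined by two induced paths, both of length at
least three, of different parity. -/
def Linked (H : SimpleGraph V) (s t : V) : Prop :=
  ∃ (p q : H.Walk s t), IsIndPath H p ∧ IsIndPath H q ∧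
    3 ≤ p.length ∧ 3 ≤ q.length ∧ p.length % 2 ≠ q.length % 2

/-- Two vertices are *odd-linked*: joined by an induced path of odd length at least five. -/
def OddLinked (H : SimpleGraph V) (s t : V) : Prop :=
  ∃ p : H.Walk s t, IsIndPath H p ∧ Odd p.length ∧ 5 ≤ p.length

/-- A *jump* over a hole with vertex set `C`: an induced path whose ends are distinct,
nonadjacent vertices of `C` and whose other vertices avoid `C`. -/
def IsJump (G : SimpleGraph V) (C : Set V) {s t : V} (P : G.Walk s t) : Prop :=
  IsIndPath G P ∧ s ∈ C ∧ t ∈ C ∧ s ≠ t ∧ ¬ G.Adj s t ∧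
    ∀ x ∈ P.support, x ∈ C → x = s ∨ x = t

/-- A jump *across* the vertex `c` of `C`. -/
def IsJumpAcross (G : SimpleGraph V) (C : Set V) {s t : V} (P : G.Walk s t) (c : V) : Prop :=
  IsJump G C P ∧ c ∈ C ∧ G.Adj c s ∧ G.Adj c t

/-- A *local* jump: no vertex of `C` other than `c, s, t` has a neighbour in the interior. -/
def IsLocalJump (G : SimpleGraph V) (C : Set V) {s t : V} (P : G.Walk s t) : Prop :=
  IsJump G C P ∧ ∃ c : V, c ∈ C ∧ G.Adj c s ∧ G.Adj c t ∧
    ∀ x ∈ C, x ≠ c → x ≠ s → x ≠ t → ∀ y ∈ interiorSet P, ¬ G.Adj x y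

/-- A *short* jump: a jump of length three. -/
def IsShortJump (G : SimpleGraph V) (C : Set V) {s t : V} (P : G.Walk s t) : Prop :=
  IsJump G C P ∧ P.length = 3

/-- `G` is three-connected. -/
def ThreeConnected (G : SimpleGraph V) : Prop :=
  4 ≤ Nat.card V ∧ ∀ S : Set V, S.ncard < 3 → (G.induce Sᶜ).Connected


section Helpers

variable {G : SimpleGraph V}

lemma edge_of_length_one {a b : V} (w : G.Walk a b) (h : w.length = 1) :
    s(a, b) ∈ w.edges := by
  cases w with
  | nil => simp at h
  | cons hadj w' =>
    rw [Walk.length_cons] at h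
    have h0 : w'.length = 0 := by omega
    have := Walk.eq_of_length_eq_zero h0
    subst this
    simp

lemma parity_walk {c : V → Fin 3} (hc : ∀ {a b : V}, G.Adj a b → c a ≠ c b)
    {a b : V} (w : G.Walk a b) (hw : ∀ u ∈ w.support, c u ≠ 0) :
    (Even w.length ↔ c a = c b) := by
  induction w with
  | nil => simp
  | @cons u m b h p ih =>
    rw [Walk.length_cons]
    have h1 : c u ≠ c m := hc h
    have h2 : Even p.length ↔ c m = c b := ih (fun x hx => hw x (by simp [hx]))
    have hu0 : c u ≠ 0 := hw u (by simp)
    have hm0 : c m ≠ 0 := hw m (by simp)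
    have hb0 : c b ≠ 0 := hw b (by simp [Walk.end_mem_support])
    constructor
    · intro he
      rw [Nat.even_add_one] at he
      have hne : c m ≠ c b := fun hh => he (h2.mpr hh)
      have e1 : (c u).val ≠ (c m).val := fun hh => h1 (Fin.ext hh)
      have e2 : (c m).val ≠ (c b).val := fun hh => hne (Fin.ext hh)
      have l1 : (c u).val < 3 := (c u).isLt
      have l2 : (c m).val < 3 := (c m).isLt
      have l3 : (c b).val < 3 := (c b).isLt
      have z1 : (c u).val ≠ 0 := fun hh => hu0 (Fin.ext hh)
      have z2 : (c m).val ≠ 0 := fun hh => hm0 (Fin.ext hh)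
      have z3 : (c b).val ≠ 0 := fun hh => hb0 (Fin.ext hh)
      exact Fin.ext (by omega)
    · intro hcc
      by_contra hne
      rw [Nat.even_add_one, not_not] at hne
      exact h1 (hcc.trans (h2.mp hne).symm)

lemma exists_shorter_of_chord [DecidableEq V] {x y a b : V} (q : G.Walk x y)
    (ha : a ∈ q.support) (hb : b ∈ q.support) (hab : G.Adj a b)
    (hne : s(a, b) ∉ q.edges) :
    ∃ r : G.Walk x y, r.length < q.length ∧ ∀ u ∈ r.support, u ∈ q.support := by
  have hb' := hb
  rw [← q.take_spec ha, Walk.mem_support_append_iff] at hb'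
  rcases hb' with hbt | hbd
  · -- b occurs before a
    set t := q.takeUntil a ha with ht
    set d := q.dropUntil a ha with hd
    set tb := t.takeUntil b hbt with htb
    set td := t.dropUntil b hbt with htd
    refine ⟨tb.append (Walk.cons hab.symm d), ?_, ?_⟩
    · have hq : t.length + d.length = q.length := by
        conv_rhs => rw [← q.take_spec ha]
        rw [Walk.length_append]
      have hts : tb.length + td.length = t.length := by
        conv_rhs => rw [← t.take_spec hbt]
        rw [Walk.length_append]
      have h0 : td.length ≠ 0 := fun h0 => hab.ne' (Walk.eq_of_length_eq_zero h0)
      have h1 : td.length ≠ 1 := by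
        intro h1
        have := edge_of_length_one td h1
        have hmem : s(b, a) ∈ q.edges :=
          Walk.edges_takeUntil_subset _ _ (Walk.edges_dropUntil_subset _ _ this)
        rw [Sym2.eq_swap] at hmem
        exact hne hmem
      rw [Walk.length_append, Walk.length_cons]
      omega
    · intro u hu
      rw [Walk.mem_support_append_iff] at hu
      rcases hu with hu | hu
      · exact Walk.support_takeUntil_subset _ _ (Walk.support_takeUntil_subset _ _ hu)
      · rw [Walk.support_cons] at hu
        rcases List.mem_cons.mp hu with rfl | hu
        · exact hb
        · exact Walk.support_dropUntil_subset _ _ hu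
  · -- b occurs after a
    set t := q.takeUntil a ha with ht
    set d := q.dropUntil a ha with hd
    set db := d.dropUntil b hbd with hdb
    set dt := d.takeUntil b hbd with hdt
    refine ⟨t.append (Walk.cons hab db), ?_, ?_⟩
    · have hq : t.length + d.length = q.length := by
        conv_rhs => rw [← q.take_spec ha]
        rw [Walk.length_append]
      have hds : dt.length + db.length = d.length := by
        conv_rhs => rw [← d.take_spec hbd]
        rw [Walk.length_append]
      have h0 : dt.length ≠ 0 := fun h0 => hab.ne (Walk.eq_of_length_eq_zero h0)
      have h1 : dt.length ≠ 1 := by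
        intro h1
        have := edge_of_length_one dt h1
        exact hne (Walk.edges_dropUntil_subset _ _ (Walk.edges_takeUntil_subset _ _ this))
      rw [Walk.length_append, Walk.length_cons]
      omega
    · intro u hu
      rw [Walk.mem_support_append_iff] at hu
      rcases hu with hu | hu
      · exact Walk.support_takeUntil_subset _ _ hu
      · rw [Walk.support_cons] at hu
        rcases List.mem_cons.mp hu with rfl | hu
        · exact ha
        · exact Walk.support_dropUntil_subset _ _
            (Walk.support_dropUntil_subset _ _ hu)

end Helpers

/-- a 3-colourable graph in which all induced paths between vertices of `X`
through `A` are even admits a 3-colouring with `v` coloured 1 and `X` coloured 2. -/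
theorem colouring_with_monochromatic_star {W : Type*} [Fintype W] (H : SimpleGraph W)
    (v : W) (X : Set W) (hX : ∀ x ∈ X, H.Adj v x) (hvX : v ∉ X)
    (hpar : ∀ x ∈ X, ∀ y ∈ X, x ≠ y → ∀ p : H.Walk x y,
      IsIndPath H p → interiorSet p ⊆ (X ∪ {v})ᶜ → Even p.length)
    (hcol : H.Colorable 3) :
    ∃ φ : W → Fin 3, (∀ a b : W, H.Adj a b → φ a ≠ φ b) ∧ φ v = 0 ∧ ∀ x ∈ X, φ x = 1 := by
  
  classical
  obtain ⟨c0⟩ := hcol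
  set c : W → Fin 3 := fun w => Equiv.swap (c0 v) 0 (c0 w) with hcdef
  have hc : ∀ {a b : W}, H.Adj a b → c a ≠ c b := by
    intro a b hab hEq
    exact c0.valid hab (Equiv.injective _ hEq)
  have hcv : c v = 0 := by simp [hcdef]
  have hcX : ∀ x ∈ X, c x ≠ 0 := by
    intro x hx h0
    exact hc (hX x hx) (hcv.trans h0.symm)
  -- key lemma: any two X-vertices joined by a walk avoiding colour 0 have the same colour
  have key : ∀ n : ℕ, ∀ x ∈ X, ∀ y ∈ X, ∀ p : H.Walk x y,
      (∀ u ∈ p.support, c u ≠ 0) → p.length ≤ n → c x = c y := by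
    intro n
    induction n using Nat.strong_induction_on with
    | _ n IH =>
    intro x hx y hy p hsupp hlen
    set q := p.bypass with hqdef
    have hq : q.IsPath := p.bypass_isPath
    have hqs : ∀ u ∈ q.support, c u ≠ 0 := fun u hu => hsupp u (p.support_bypass_subset hu)
    have hql : q.length ≤ n := p.length_bypass_le.trans hlen
    by_cases hch : ∀ a ∈ q.support, ∀ b ∈ q.support, H.Adj a b → s(a, b) ∈ q.edges
    · -- q is an induced path
      by_cases hxy : x = y
      · subst hxy; rfl
      by_cases hz : ∃ z, z ∈ interiorSet q ∧ z ∈ X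
      · obtain ⟨z, ⟨hzs, hzx, hzy⟩, hzX⟩ := hz
        set t := q.takeUntil z hzs with htdef
        set d := q.dropUntil z hzs with hddef
        have hsum : t.length + d.length = q.length := by
          conv_rhs => rw [← q.take_spec hzs]
          rw [Walk.length_append]
        have ht0 : t.length ≠ 0 := fun h0 => hzx (Walk.eq_of_length_eq_zero h0).symm
        have hd0 : d.length ≠ 0 := fun h0 => hzy (Walk.eq_of_length_eq_zero h0)
        have h1 : c x = c z := by
          refine IH t.length (by omega) x hx z hzX t
            (fun u hu => hqs u (Walk.support_takeUntil_subset _ _ hu)) le_rfl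
        have h2 : c z = c y := by
          refine IH d.length (by omega) z hzX y hy d
            (fun u hu => hqs u (Walk.support_dropUntil_subset _ _ hu)) le_rfl
        exact h1.trans h2
      · push_neg at hz
        have hsub : interiorSet q ⊆ (X ∪ {v})ᶜ := by
          intro w hw
          rcases hw with ⟨hws, hwx, hwy⟩
          intro hmem
          rcases hmem with hmem | hmem
          · exact hz w ⟨hws, hwx, hwy⟩ hmem
          · rcases hmem with rfl
            exact hqs w hws hcv
        have heven : Even q.length := hpar x hx y hy hxy q ⟨hq, hch⟩ hsub
        exact (parity_walk hc q hqs).mp heven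
    · push_neg at hch
      obtain ⟨a, ha, b, hb, hab, hnab⟩ := hch
      obtain ⟨r, hrlen, hrsupp⟩ := exists_shorter_of_chord q ha hb hab hnab
      exact IH r.length (by omega) x hx y hy r (fun u hu => hqs u (hrsupp u hu)) le_rfl
  -- the condition for swapping colours 1 and 2
  set Cond : W → Prop := fun w => ∃ x ∈ X, c x = 2 ∧
    ∃ p : H.Walk w x, ∀ u ∈ p.support, c u ≠ 0 with hConddef
  have hCond0 : ∀ w, Cond w → c w ≠ 0 := by
    rintro w ⟨x, hx, hx2, p, hp⟩
    exact hp w p.start_mem_support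
  have hCondAdj : ∀ a b, H.Adj a b → c b ≠ 0 → Cond a → Cond b := by
    rintro a b hab hb0 ⟨x, hx, hx2, p, hp⟩
    refine ⟨x, hx, hx2, Walk.cons hab.symm p, ?_⟩
    intro u hu
    rw [Walk.support_cons] at hu
    rcases List.mem_cons.mp hu with rfl | hu
    · exact hb0
    · exact hp u hu
  have hswap0 : ∀ z : Fin 3, z ≠ 0 → Equiv.swap (1 : Fin 3) 2 z ≠ 0 := by decide
  refine ⟨fun w => if Cond w then Equiv.swap (1 : Fin 3) 2 (c w) else c w, ?_, ?_, ?_⟩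
  · intro a b hab hEq
    dsimp only at hEq
    by_cases hca : Cond a <;> by_cases hcb : Cond b
    · rw [if_pos hca, if_pos hcb] at hEq
      exact hc hab (Equiv.injective _ hEq)
    · have hb0 : c b = 0 := by
        by_contra h0
        exact hcb (hCondAdj a b hab h0 hca)
      rw [if_pos hca, if_neg hcb, hb0] at hEq
      exact hswap0 (c a) (hCond0 a hca) hEq
    · have ha0 : c a = 0 := by
        by_contra h0
        exact hca (hCondAdj b a hab.symm h0 hcb)
      rw [if_neg hca, if_pos hcb, ha0] at hEq
      exact hswap0 (c b) (hCond0 b hcb) hEq.symm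
    · rw [if_neg hca, if_neg hcb] at hEq
      exact hc hab hEq
  · have : ¬ Cond v := fun h => hCond0 v h hcv
    dsimp only
    rw [if_neg this, hcv]
  · intro x hx
    by_cases hx2 : c x = 2
    · have hcond : Cond x := ⟨x, hx, hx2, Walk.nil, by
        intro u hu
        rw [Walk.support_nil, List.mem_singleton] at hu
        rw [hu]
        exact hcX x hx⟩
      dsimp only
      rw [if_pos hcond, hx2]
      decide
    · have hx1 : c x = 1 := by
        have h0 := hcX x hx
        have l1 : (c x).val < 3 := (c x).isLt
        have z1 : (c x).val ≠ 0 := fun hh => h0 (Fin.ext hh)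
        have z2 : (c x).val ≠ 2 := fun hh => hx2 (Fin.ext hh)
        exact Fin.ext (by omega)
      have hcond : ¬ Cond x := by
        rintro ⟨y, hy, hy2, p, hp⟩
        have := key p.length x hx y hy p hp le_rfl
        rw [hx1, hy2] at this
        exact absurd this (by decide)
      dsimp only
      rw [if_neg hcond, hx1]
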